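/- There is no finite set X of sound syllogistic rules in 𝒮†₁ such that the indirect derivation relation ⊩_X (with reductio ad absurdum) is complete: for any such X, there is a finite unsatisfiable set Γ of 𝒮†₁-formulas from which no absurdity is derivable via ⊩_X. -/

import Mathlib

/-- Literals over a set of atoms `P`: an atom or a negated atom. -/
inductive Lit (P : Type) : Type
  | pos (p : P)
  | neg (p : P)
deriving DecidableEq

/-- Formulas of the (extended) numerical syllogistic: `∃_{≤ i}(ℓ,m)` and `∃_{> i}(ℓ,m)`. -/
inductive Fm (P : Type) : Type
  | le (i : ℕ) (l m : Lit P)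
  | gt (i : ℕ) (l m : Lit P)
deriving DecidableEq

/-- Interpretation of a literal in a structure with domain `A` given by `I`. -/
def Lit.interp {P A : Type} (I : P → Set A) : Lit P → Set A
  | .pos p => I p
  | .neg p => (I p)ᶜ

/-- Truth of a formula in a structure: cardinality constraints on `ℓ^𝔄 ∩ m^𝔄`. -/
def Fm.sat {P A : Type} (I : P → Set A) : Fm P → Prop
  | .le i l m => Cardinal.mk ↥(l.interp I ∩ m.interp I) ≤ (i : Cardinal)
  | .gt i l m => (i : Cardinal) < Cardinal.mk ↥(l.interp I ∩ m.interp I)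

/-- Semantic entailment: every structure (nonempty domain) satisfying `Θ` satisfies `ψ`. -/
def Entails {P : Type} (Θ : Set (Fm P)) (ψ : Fm P) : Prop :=
  ∀ (A : Type) (_ : Nonempty A) (I : P → Set A), (∀ φ ∈ Θ, φ.sat I) → ψ.sat I

/-- The negation map, swapping `∃_{≤ i}` and `∃_{> i}`. -/
def Fm.negate {P : Type} : Fm P → Fm P
  | .le i l m => .gt i l m
  | .gt i l m => .le i l m

/-- Swap the (unordered) arguments of a formula. -/
def Fm.swap {P : Type} : Fm P → Fm P
  | .le i l m => .le i m l
  | .gt i l m => .gt i m l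

/-- The numerical index of a formula. -/
def Fm.idx {P : Type} : Fm P → ℕ
  | .le i _ _ => i
  | .gt i _ _ => i

/-- The atom of a literal. -/
def Lit.atom {P : Type} : Lit P → P
  | .pos p => p
  | .neg p => p

/-- The two (unordered) literal arguments of a formula. -/
def Fm.args {P : Type} : Fm P → Lit P × Lit P
  | .le _ l m => (l, m)
  | .gt _ l m => (l, m)

/-- All atoms of a formula lie in `S`. -/
def Fm.atomsIn {P : Type} (S : Set P) (φ : Fm P) : Prop :=
  φ.args.1.atom ∈ S ∧ φ.args.2.atom ∈ S

/-- Applying a substitution to a literal. -/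
def Lit.map {P : Type} (g : P → P) : Lit P → Lit P
  | .pos p => .pos (g p)
  | .neg p => .neg (g p)

/-- Applying a substitution to a formula. -/
def Fm.map {P : Type} (g : P → P) : Fm P → Fm P
  | .le i l m => .le i (l.map g) (m.map g)
  | .gt i l m => .gt i (l.map g) (m.map g)

/-- A syllogistic rule: a finite set of antecedents and a consequent. -/
structure Rule (P : Type) where
  ants : Finset (Fm P)
  con : Fm P

/-- The direct syllogistic derivation relation `⊢_X`. -/
inductive Derives {P : Type} (X : Set (Rule P)) : Set (Fm P) → Fm P → Prop
  | prem {Θ : Set (Fm P)} {θ : Fm P} : θ ∈ Θ → Derives X Θ θ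
  | rule {Θ : Set (Fm P)} (r : Rule P) (g : P → P) : r ∈ X →
      (∀ ψ ∈ r.ants, Derives X Θ (ψ.map g)) → Derives X Θ (r.con.map g)

/-- The indirect syllogistic derivation relation `⊩_X` (with reductio ad absurdum). -/
inductive IndDerives {P : Type} (X : Set (Rule P)) : Set (Fm P) → Fm P → Prop
  | prem {Θ : Set (Fm P)} {θ : Fm P} : θ ∈ Θ → IndDerives X Θ θ
  | rule {Θ : Set (Fm P)} (r : Rule P) (g : P → P) : r ∈ X →
      (∀ ψ ∈ r.ants, IndDerives X Θ (ψ.map g)) → IndDerives X Θ (r.con.map g)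
  | raa {Θ : Set (Fm P)} {θ : Fm P} (i : ℕ) (p : P) :
      IndDerives X (insert θ Θ) (Fm.gt i (Lit.pos p) (Lit.neg p)) →
      IndDerives X Θ θ.negate
namespace NoSyl

abbrev At : Type := Sum ℕ ℕ

/-- position of a "cycle" literal: atoms `Sum.inl i` for `i < t`. -/
def posL (t : ℕ) : Lit At → Option ℕ
  | .pos (Sum.inl i) => if i < t then some i else none
  | .neg (Sum.inl i) => if i < t then some (i + t) else none
  | _ => none

/-- class of a pair of non-cycle (or mixed) literals -/
def clsAux : Lit At → Lit At → ℕ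
  | .pos a, .pos b =>
      if a = b then 2 else
      match a, b with
      | Sum.inr _, Sum.inr _ => 0
      | _, _ => 2
  | .neg _, .neg _ => 2
  | .pos a, .neg b => if a = b then 0 else 2
  | .neg a, .pos b => if a = b then 0 else 2

/-- cyclic forward distance from `a` to `b` -/
def dd (t a b : ℕ) : ℕ := (b + 2*t - a) % (2*t)

/-- class of a pair of literals: pretended size (capped at 2) of the intersection -/
def cls (t : ℕ) (l m : Lit At) : ℕ :=
  match posL t l, posL t m with
  | some a, some b => min (t - min (dd t a b) (2*t - dd t a b)) 2
  | _, _ => clsAux l m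

/-- the complete theory -/
def T (t : ℕ) : Set (Fm At) :=
  { φ | match φ with
        | .le i l m => 2 ≤ i ∨ cls t l m ≤ i
        | .gt i l m => i < 2 ∧ i < cls t l m }

/-- base point at position `s` lies in the region of the literal with position `c` -/
def memPos (t s c : ℕ) : Prop := dd t s c = 0 ∨ t < dd t s c

lemma dd_lt (t a b : ℕ) (ht : 0 < t) : dd t a b < 2*t := Nat.mod_lt _ (by omega)

lemma dd_eq (t a b : ℕ) (ha : a < 2*t) (hb : b < 2*t) :
    dd t a b = if a ≤ b then b - a else b + 2*t - a := by
  unfold dd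
  split
  · have h1 : b + 2*t - a = (b - a) + 2*t := by omega
    rw [h1, Nat.add_mod_right, Nat.mod_eq_of_lt (by omega)]
  · rw [Nat.mod_eq_of_lt (by omega)]

lemma succ_mod (t b : ℕ) (hb : b < 2*t) : (b+1) % (2*t) = if b+1 < 2*t then b+1 else 0 := by
  split
  · exact Nat.mod_eq_of_lt ‹_›
  · have h : b + 1 = 2*t := by omega
    rw [h, Nat.mod_self]

lemma antip (t a b s : ℕ) (ha : a < 2*t) (hb : b < 2*t) (hs : s < 2*t)
    (hab : dd t a b = t) : (memPos t s b ↔ ¬ memPos t s a) := by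
  unfold memPos
  rw [dd_eq t a b ha hb] at hab
  rw [dd_eq t s b hs hb, dd_eq t s a hs ha]
  split_ifs at * <;> omega

lemma fresh_region (t π k : ℕ) (hπ : π < 2*t) (hk : k < t) :
    memPos t ((π + k) % (2*t)) π := by
  unfold memPos dd
  have h1 : (π + k) % (2*t) = if π + k < 2*t then π + k else π + k - 2*t := by
    split
    · exact Nat.mod_eq_of_lt ‹_›
    · rw [Nat.mod_eq_sub_mod (by omega), Nat.mod_eq_of_lt (by omega)]
  rw [h1]; split_ifs with h
  · have h2 : π + 2*t - (π + k) = 2*t - k := by omega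
    rw [h2]
    rcases Nat.eq_zero_or_pos k with hk0 | hk0
    · left; rw [hk0, Nat.sub_zero, Nat.mod_self]
    · right; rw [Nat.mod_eq_of_lt (by omega)]; omega
  · have h2 : π + 2*t - (π + k - 2*t) = (2*t - k) + 2*t := by omega
    rw [h2, Nat.add_mod_right]
    rcases Nat.eq_zero_or_pos k with hk0 | hk0
    · left; rw [hk0, Nat.sub_zero, Nat.mod_self]
    · right; rw [Nat.mod_eq_of_lt (by omega)]; omega

lemma add_mod_inj (t π k₁ k₂ : ℕ) (h1 : k₁ < t) (h2 : k₂ < t)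
    (he : (π + k₁) % (2*t) = (π + k₂) % (2*t)) : k₁ = k₂ := by
  have h3 : Nat.ModEq (2*t) (π + k₁) (π + k₂) := he
  have h4 : Nat.ModEq (2*t) k₁ k₂ := Nat.ModEq.add_left_cancel' π h3
  have h5 : k₁ % (2*t) = k₂ % (2*t) := h4
  rwa [Nat.mod_eq_of_lt (by omega), Nat.mod_eq_of_lt (by omega)] at h5

lemma cap_unique (t a b s : ℕ) (ha : a < 2*t) (hb : b < 2*t) (hs : s < 2*t)
    (hab : dd t a b = t+1) (h1 : memPos t s a) (h2 : memPos t s b) : s = a := by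
  unfold memPos at h1 h2
  rw [dd_eq t a b ha hb] at hab
  rw [dd_eq t s a hs ha] at h1
  rw [dd_eq t s b hs hb] at h2
  split_ifs at * <;> omega

lemma dd_rev (t a b : ℕ) (ha : a < 2*t) (hb : b < 2*t) (hne : dd t a b ≠ 0) :
    dd t b a = 2*t - dd t a b := by
  rw [dd_eq t a b ha hb] at *
  rw [dd_eq t b a hb ha]
  split_ifs at * <;> omega

lemma dd_self (t a : ℕ) (ha : a < 2*t) : dd t a a = 0 := by
  rw [dd_eq t a a ha ha]; simp

lemma two_wit (t a b : ℕ) (ht : 2 ≤ t) (ha : a < 2*t) (hb : b < 2*t)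
    (hd : dd t a b ≤ t - 2) :
    memPos t b a ∧ memPos t b b ∧ memPos t ((b+1) % (2*t)) a ∧
      memPos t ((b+1) % (2*t)) b ∧ b ≠ (b+1) % (2*t) := by
  have hsm := succ_mod t b hb
  have hself := dd_self t b hb
  unfold memPos
  rw [hsm]
  rw [dd_eq t a b ha hb] at hd
  split_ifs with h
  · rw [dd_eq t b a hb ha, dd_eq t (b+1) a (by omega) ha, dd_eq t (b+1) b (by omega) hb]
    split_ifs at hd ⊢ <;> omega
  · rw [dd_eq t b a hb ha, dd_eq t 0 a (by omega) ha, dd_eq t 0 b (by omega) hb]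
    split_ifs at hd ⊢ <;> omega

end NoSyl
namespace NoSyl

lemma cls2_wit (t a b : ℕ) (ht : 2 ≤ t) (ha : a < 2*t) (hb : b < 2*t)
    (h2 : min (t - min (dd t a b) (2*t - dd t a b)) 2 = 2) :
    ∃ s₁ s₂, s₁ < 2*t ∧ s₂ < 2*t ∧ s₁ ≠ s₂ ∧ (memPos t s₁ a ∧ memPos t s₁ b) ∧
      (memPos t s₂ a ∧ memPos t s₂ b) := by
  have hlt := dd_lt t a b (by omega)
  have hcases : dd t a b ≤ t - 2 ∨ 2*t - dd t a b ≤ t - 2 := by omega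
  rcases hcases with hc | hc
  · obtain ⟨w1, w2, w3, w4, w5⟩ := two_wit t a b ht ha hb hc
    exact ⟨b, (b+1) % (2*t), hb, Nat.mod_lt _ (by omega), w5, ⟨w1, w2⟩, ⟨w3, w4⟩⟩
  · have hne : dd t a b ≠ 0 := by omega
    have hrev : dd t b a = 2*t - dd t a b := dd_rev t a b ha hb hne
    obtain ⟨w1, w2, w3, w4, w5⟩ := two_wit t b a ht hb ha (by omega)
    exact ⟨a, (a+1) % (2*t), ha, Nat.mod_lt _ (by omega), w5, ⟨w2, w1⟩, ⟨w4, w3⟩⟩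

lemma cls1_cases (t a b : ℕ) (ht : 2 ≤ t) (ha : a < 2*t) (hb : b < 2*t)
    (h1 : min (t - min (dd t a b) (2*t - dd t a b)) 2 = 1) :
    dd t a b = t+1 ∨ dd t a b = t-1 := by
  have hlt := dd_lt t a b (by omega)
  omega

/-- the unique position in the region of a class-1 pair -/
def anchor (t a b : ℕ) : ℕ := if dd t a b = t+1 then a else b

lemma anchor_mem (t a b : ℕ) (ht : 2 ≤ t) (ha : a < 2*t) (hb : b < 2*t)
    (h1 : min (t - min (dd t a b) (2*t - dd t a b)) 2 = 1) :
    anchor t a b < 2*t ∧ memPos t (anchor t a b) a ∧ memPos t (anchor t a b) b := by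
  unfold anchor
  rcases cls1_cases t a b ht ha hb h1 with hc | hc
  · rw [if_pos hc]
    refine ⟨ha, Or.inl (dd_self t a ha), Or.inr ?_⟩
    show t < dd t a b; omega
  · rw [if_neg (by omega)]
    have hrev : dd t b a = 2*t - dd t a b := dd_rev t a b ha hb (by omega)
    refine ⟨hb, Or.inr ?_, Or.inl (dd_self t b hb)⟩
    show t < dd t b a; omega

lemma cls1_unique (t a b s : ℕ) (ht : 2 ≤ t) (ha : a < 2*t) (hb : b < 2*t) (hs : s < 2*t)
    (h1 : min (t - min (dd t a b) (2*t - dd t a b)) 2 = 1)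
    (hma : memPos t s a) (hmb : memPos t s b) : s = anchor t a b := by
  unfold anchor
  rcases cls1_cases t a b ht ha hb h1 with hc | hc
  · rw [if_pos hc]; exact cap_unique t a b s ha hb hs hc hma hmb
  · rw [if_neg (by omega)]
    have hrev : dd t b a = 2*t - dd t a b := dd_rev t a b ha hb (by omega)
    exact cap_unique t b a s hb ha hs (by omega) hmb hma

lemma posL_lt (t : ℕ) (l : Lit At) (a : ℕ) (h : posL t l = some a) : a < 2*t := by
  rcases l with p | p <;> rcases p with i | i <;> simp [posL] at h <;> omega

lemma posL_pos_inl (t i : ℕ) (hi : i < t) : posL t (.pos (Sum.inl i)) = some i := by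
  simp [posL, hi]

lemma posL_neg_inl (t i : ℕ) (hi : i < t) : posL t (.neg (Sum.inl i)) = some (i + t) := by
  simp [posL, hi]

/-- the capped position of a formula (if it is a cap formula) -/
def capPos (t : ℕ) : Fm At → Option ℕ
  | .le _ l m =>
    match posL t l, posL t m with
    | some a, some b =>
        if dd t a b = t+1 then some a else if dd t b a = t+1 then some b else none
    | _, _ => none
  | _ => none

lemma exists_fresh (t : ℕ) (Δ : Finset (Fm At)) (hcard : Δ.card < t) (π : ℕ) (hπ : π < 2*t) :
    ∃ s, s < 2*t ∧ memPos t s π ∧ some s ∉ Δ.image (capPos t) := by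
  by_contra h
  push_neg at h
  have ht : 0 < t := by omega
  have hsub : (Finset.range t).image (fun k => some ((π + k) % (2*t))) ⊆ Δ.image (capPos t) := by
    intro x hx
    obtain ⟨k, hk, rfl⟩ := Finset.mem_image.1 hx
    have hk' : k < t := Finset.mem_range.1 hk
    exact h _ (Nat.mod_lt _ (by omega)) (fresh_region t π k hπ hk')
  have hcardim : ((Finset.range t).image (fun k => some ((π + k) % (2*t)))).card = t := by
    rw [Finset.card_image_of_injOn, Finset.card_range]
    intro k₁ h₁ k₂ h₂ he
    exact add_mod_inj t π k₁ k₂ (Finset.mem_range.1 h₁) (Finset.mem_range.1 h₂)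
      (Option.some_injective _ he)
  have := Finset.card_le_card hsub
  have := Finset.card_image_le (s := Δ) (f := capPos t)
  omega

open Classical in
/-- fresh (uncapped) position in the region of π -/
noncomputable def frp (t : ℕ) (Δ : Finset (Fm At)) (π : ℕ) : ℕ :=
  if h : ∃ s, s < 2*t ∧ memPos t s π ∧ some s ∉ Δ.image (capPos t) then h.choose else 0

lemma frp_spec (t : ℕ) (Δ : Finset (Fm At)) (hcard : Δ.card < t) (π : ℕ) (hπ : π < 2*t) :
    frp t Δ π < 2*t ∧ memPos t (frp t Δ π) π ∧ some (frp t Δ π) ∉ Δ.image (capPos t) := by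
  have h := exists_fresh t Δ hcard π hπ
  simp only [frp]
  rw [dif_pos h]
  exact h.choose_spec

/-- preferred position for the fresh points of a formula -/
def piD (t : ℕ) : Fm At → ℕ
  | .gt _ l m => (posL t l).getD ((posL t m).getD 0)
  | _ => 0

lemma piD_lt (t : ℕ) (ht : 0 < t) (φ : Fm At) : piD t φ < 2*t := by
  rcases φ with ⟨i, l, m⟩ | ⟨i, l, m⟩
  · simp [piD]; omega
  · simp only [piD]
    cases hl : posL t l
    · cases hm : posL t m
      · simp; omega
      · simpa using posL_lt t m _ hm
    · simpa using posL_lt t l _ hl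

noncomputable def sF (t : ℕ) (Δ : Finset (Fm At)) (φ : Fm At) : ℕ := frp t Δ (piD t φ)

/-- positive non-cycle atoms of a gt-formula: fresh points live there -/
def posM (t : ℕ) : Fm At → At → Prop
  | .gt _ l m, p => (l = .pos p ∧ posL t l = none) ∨ (m = .pos p ∧ posL t m = none)
  | _, _ => False

/-- base pattern -/
def patt (t s : ℕ) : At → Prop
  | Sum.inl i => i < t ∧ memPos t s i
  | Sum.inr _ => False

/-- the model for a window Δ -/
noncomputable def Mdl (t : ℕ) (Δ : Finset (Fm At)) : At → Set (Fin (2*t) ⊕ (Fm At × Bool)) :=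
  fun p => { x | match x with
    | Sum.inl s => patt t s.val p
    | Sum.inr (φ, _) => (φ ∈ Δ ∧ posM t φ p) ∨ patt t (sF t Δ φ) p }

noncomputable def posOf (t : ℕ) (Δ : Finset (Fm At)) : (Fin (2*t) ⊕ (Fm At × Bool)) → ℕ :=
  Sum.elim (fun s => s.val) (fun q => sF t Δ q.1)

lemma posOf_lt (t : ℕ) (Δ : Finset (Fm At)) (ht : 0 < t) (hcard : Δ.card < t)
    (x : Fin (2*t) ⊕ (Fm At × Bool)) : posOf t Δ x < 2*t := by
  rcases x with s | ⟨φ, b⟩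
  · exact s.2
  · exact (frp_spec t Δ hcard (piD t φ) (piD_lt t ht φ)).1

lemma posM_not_cycle (t : ℕ) (φ : Fm At) (i : ℕ) (hi : i < t) : ¬ posM t φ (Sum.inl i) := by
  rcases φ with ⟨j, l, m⟩ | ⟨j, l, m⟩ <;> simp only [posM]
  · exact fun h => h
  · rintro (⟨rfl, h⟩ | ⟨rfl, h⟩) <;> rw [posL_pos_inl t i hi] at h <;> exact nomatch h

lemma interp_some (t : ℕ) (Δ : Finset (Fm At)) (ht : 0 < t) (hcard : Δ.card < t)
    (l : Lit At) (a : ℕ) (hl : posL t l = some a) (x : Fin (2*t) ⊕ (Fm At × Bool)) :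
    x ∈ l.interp (Mdl t Δ) ↔ memPos t (posOf t Δ x) a := by
  rcases l with p | p <;> rcases p with i | i
  · -- pos (inl i)
    have hi : i < t := by by_contra h; simp [posL, h] at hl
    rw [posL_pos_inl t i hi] at hl
    injection hl with hl; subst hl
    rcases x with s | ⟨φ, b⟩
    · show patt t s.val (Sum.inl i) ↔ _
      simp [patt, posOf, hi]
    · show (φ ∈ Δ ∧ posM t φ (Sum.inl i)) ∨ patt t (sF t Δ φ) (Sum.inl i) ↔ _
      simp [patt, posOf, hi, posM_not_cycle t φ i hi]
  · simp [posL] at hl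
  · -- neg (inl i)
    have hi : i < t := by by_contra h; simp [posL, h] at hl
    rw [posL_neg_inl t i hi] at hl
    injection hl with hl; subst hl
    have hx := posOf_lt t Δ ht hcard x
    have hanti := antip t i (i + t) (posOf t Δ x) (by omega) (by omega) hx
      (by rw [dd_eq t i (i+t) (by omega) (by omega)]; split_ifs <;> omega)
    rw [hanti]
    show x ∈ (Mdl t Δ (Sum.inl i))ᶜ ↔ ¬ memPos t (posOf t Δ x) i
    have hmem : x ∈ Mdl t Δ (Sum.inl i) ↔ memPos t (posOf t Δ x) i := by
      rcases x with s | ⟨φ, b⟩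
      · show patt t s.val (Sum.inl i) ↔ _
        simp [patt, posOf, hi]
      · show (φ ∈ Δ ∧ posM t φ (Sum.inl i)) ∨ patt t (sF t Δ φ) (Sum.inl i) ↔ _
        simp [patt, posOf, hi, posM_not_cycle t φ i hi]
    exact not_congr hmem
  · simp [posL] at hl

end NoSyl
namespace NoSyl

lemma mem_or_neg (t : ℕ) (φ : Fm At) : φ ∈ T t ∨ φ.negate ∈ T t := by
  rcases φ with ⟨i, l, m⟩ | ⟨i, l, m⟩ <;> simp only [T, Fm.negate, Set.mem_setOf_eq] <;> omega

lemma cls_compl (t : ℕ) (ht : 0 < t) (p : At) : cls t (.pos p) (.neg p) = 0 := by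
  rcases p with i | i
  · by_cases hi : i < t
    · rw [cls, posL_pos_inl t i hi, posL_neg_inl t i hi]
      have : dd t i (i + t) = t := by
        rw [dd_eq t i (i+t) (by omega) (by omega)]; split_ifs <;> omega
      simp only [this]
      omega
    · have h1 : posL t (Lit.pos (Sum.inl i)) = none := by simp [posL]; omega
      have h2 : posL t (Lit.neg (Sum.inl i)) = none := by simp [posL]; omega
      rw [cls, h1, h2]
      simp [clsAux]
  · rw [cls]
    simp [posL, clsAux]

lemma no_absurd (t : ℕ) (ht : 0 < t) (i : ℕ) (p : At) :
    Fm.gt i (.pos p) (.neg p) ∉ T t := by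
  simp only [T, Set.mem_setOf_eq, cls_compl t ht p]
  omega

lemma interp_map {A : Type} (I : At → Set A) (g : At → At) (l : Lit At) :
    Lit.interp I (l.map g) = Lit.interp (fun p => I (g p)) l := by
  rcases l with p | p <;> rfl

lemma sat_map {A : Type} (I : At → Set A) (g : At → At) (φ : Fm At) :
    Fm.sat I (φ.map g) ↔ Fm.sat (fun p => I (g p)) φ := by
  rcases φ with ⟨i, l, m⟩ | ⟨i, l, m⟩ <;>
    simp only [Fm.map, Fm.sat, interp_map]

lemma negate_sat {A : Type} (I : At → Set A) (φ : Fm At) :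
    Fm.sat I φ.negate ↔ ¬ Fm.sat I φ := by
  rcases φ with ⟨i, l, m⟩ | ⟨i, l, m⟩ <;> simp only [Fm.negate, Fm.sat]
  · exact not_le.symm
  · exact not_lt.symm

lemma idx_negate (φ : Fm At) : φ.negate.idx = φ.idx := by
  rcases φ with _ | _ <;> rfl

lemma idx_map (g : At → At) (φ : Fm At) : (φ.map g).idx = φ.idx := by
  rcases φ with _ | _ <;> rfl

lemma fresh_sat (t : ℕ) (Δ : Finset (Fm At)) (ht : 2 ≤ t) (hcard : Δ.card < t)
    (i : ℕ) (l m : Lit At) (hΔ : Fm.gt i l m ∈ Δ) (hcls : cls t l m ≠ 0)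
    (hnb : posL t l = none ∨ posL t m = none) (b : Bool) :
    Sum.inr (Fm.gt i l m, b) ∈ l.interp (Mdl t Δ) ∩ m.interp (Mdl t Δ) := by
  set φ := Fm.gt i l m with hφ
  have hsp := frp_spec t Δ hcard (piD t φ) (piD_lt t (by omega) φ)
  constructor
  · cases hl : posL t l with
    | some a =>
      rw [interp_some t Δ (by omega) hcard l a hl]
      have hpd : piD t φ = a := by simp [piD, hφ, hl]
      show memPos t (sF t Δ φ) a
      rw [← hpd]; exact hsp.2.1
    | none =>
      rcases l with p | p
      · exact Or.inl ⟨hΔ, Or.inl ⟨rfl, hl⟩⟩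
      · show Sum.inr (φ, b) ∈ (Mdl t Δ p)ᶜ
        intro hmem
        rcases hmem with ⟨hφΔ, hpm⟩ | hpatt
        · rcases hpm with ⟨he, _⟩ | ⟨he, hm'⟩
          · exact nomatch he
          · apply hcls
            rw [he] at *
            rw [cls, hl, hm']
            simp [clsAux]
        · rcases p with j | j
          · have hj : ¬ j < t := by
              intro hj; rw [posL_neg_inl t j hj] at hl; exact nomatch hl
            exact hj hpatt.1
          · exact hpatt
  · cases hm : posL t m with
    | some a =>
      have hln : posL t l = none := by
        rcases hnb with h | h
        · exact h
        · rw [h] at hm; exact nomatch hm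
      rw [interp_some t Δ (by omega) hcard m a hm]
      have hpd : piD t φ = a := by simp [piD, hφ, hln, hm]
      show memPos t (sF t Δ φ) a
      rw [← hpd]; exact hsp.2.1
    | none =>
      rcases m with p | p
      · exact Or.inl ⟨hΔ, Or.inr ⟨rfl, hm⟩⟩
      · show Sum.inr (φ, b) ∈ (Mdl t Δ p)ᶜ
        intro hmem
        rcases hmem with ⟨hφΔ, hpm⟩ | hpatt
        · rcases hpm with ⟨he, hl'⟩ | ⟨he, _⟩
          · apply hcls
            rw [he] at *
            rw [cls, hl', hm]
            simp [clsAux]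
          · exact nomatch he
        · rcases p with j | j
          · have hj : ¬ j < t := by
              intro hj; rw [posL_neg_inl t j hj] at hm; exact nomatch hm
            exact hj hpatt.1
          · exact hpatt

lemma cap_in (t : ℕ) (Δ : Finset (Fm At)) (ht : 2 ≤ t) (i : ℕ) (l m : Lit At) (a b : ℕ)
    (hφ : Fm.le i l m ∈ Δ) (hl : posL t l = some a) (hm : posL t m = some b)
    (h1 : min (t - min (dd t a b) (2*t - dd t a b)) 2 = 1) :
    some (anchor t a b) ∈ Δ.image (capPos t) := by
  have ha := posL_lt t l a hl
  have hb := posL_lt t m b hm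
  refine Finset.mem_image.2 ⟨_, hφ, ?_⟩
  rcases cls1_cases t a b ht ha hb h1 with hc | hc
  · simp only [capPos, hl, hm, anchor, hc]
    simp
  · have hrev : dd t b a = 2*t - dd t a b := dd_rev t a b ha hb (by omega)
    have h2 : anchor t a b = b := if_neg (by omega)
    have h3 : dd t a b ≠ t + 1 := by omega
    have h4 : dd t b a = t + 1 := by omega
    rw [h2]
    simp only [capPos, hl, hm, if_neg h3, if_pos h4]

end NoSyl
namespace NoSyl

lemma cls_some (t : ℕ) (l m : Lit At) (a b : ℕ) (hl : posL t l = some a)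
    (hm : posL t m = some b) :
    cls t l m = min (t - min (dd t a b) (2*t - dd t a b)) 2 := by
  rw [cls, hl, hm]

lemma cls_none_l (t : ℕ) (l m : Lit At) (hl : posL t l = none) :
    cls t l m = clsAux l m := by
  cases hm : posL t m <;> rw [cls, hl, hm]

lemma cls_none_r (t : ℕ) (l m : Lit At) (hm : posL t m = none) :
    cls t l m = clsAux l m := by
  cases hl : posL t l <;> rw [cls, hl, hm]

lemma mem_T_le (t i : ℕ) (l m : Lit At) :
    (Fm.le i l m ∈ T t) ↔ (2 ≤ i ∨ cls t l m ≤ i) := Iff.rfl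

lemma mem_T_gt (t i : ℕ) (l m : Lit At) :
    (Fm.gt i l m ∈ T t) ↔ (i < 2 ∧ i < cls t l m) := Iff.rfl

lemma mk_lower0 {A : Type} (S : Set A) (h : S.Nonempty) :
    ((0:ℕ) : Cardinal) < Cardinal.mk ↥S := by
  rw [Nat.cast_zero]
  exact pos_iff_ne_zero.2 (Cardinal.mk_ne_zero_iff.2 h.to_subtype)

lemma mk_lower1 {A : Type} (S : Set A) (h : S.Nontrivial) :
    ((1:ℕ) : Cardinal) < Cardinal.mk ↥S := by
  rw [Nat.cast_one]
  exact Cardinal.one_lt_iff_nontrivial.2 (Set.nontrivial_coe_sort.2 h)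

lemma mk_upper0 {A : Type} (S : Set A) (i : ℕ) (h : S = ∅) :
    Cardinal.mk ↥S ≤ (i : Cardinal) := by
  subst h; rw [Cardinal.mk_emptyCollection]; exact zero_le

lemma mk_upper1 {A : Type} (S : Set A) (h : S.Subsingleton) :
    Cardinal.mk ↥S ≤ ((1:ℕ) : Cardinal) := by
  rw [Nat.cast_one]; exact Cardinal.mk_le_one_iff_set_subsingleton.2 h

lemma posM_q_unique (t : ℕ) (Δ : Finset (Fm At)) (hT : ∀ φ ∈ Δ, φ ∈ T t)
    (ψ : Fm At) (hψ : ψ ∈ Δ) (k k' : ℕ)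
    (h1 : posM t ψ (Sum.inr k)) (h2 : posM t ψ (Sum.inr k')) : k = k' := by
  rcases ψ with ⟨j, l, m⟩ | ⟨j, l, m⟩
  · exact absurd h1 (by simp [posM])
  · have hTψ := hT _ hψ
    simp only [T, Set.mem_setOf_eq] at hTψ
    rcases h1 with ⟨he1, hn1⟩ | ⟨he1, hn1⟩ <;> rcases h2 with ⟨he2, hn2⟩ | ⟨he2, hn2⟩
    · rw [he1] at he2; injection he2 with h; injection h
    · by_contra hkk
      rw [he1] at hn1; rw [he2] at hn2
      rw [he1, he2, cls, hn1, hn2] at hTψ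
      simp only [clsAux] at hTψ
      rw [if_neg (by simp [hkk])] at hTψ
      omega
    · by_contra hkk
      rw [he1] at hn1; rw [he2] at hn2
      rw [he2, he1, cls, hn2, hn1] at hTψ
      simp only [clsAux] at hTψ
      rw [if_neg (by simp [Ne.symm hkk])] at hTψ
      omega
    · rw [he1] at he2; injection he2 with h; injection h

lemma clsAux_cases (l m : Lit At) : clsAux l m = 0 ∨ clsAux l m = 2 := by
  rcases l with p | p <;> rcases m with q | q <;> simp only [clsAux]
  · split_ifs
    · simp
    · rcases p with j | k <;> rcases q with j' | k' <;> simp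
  · split_ifs <;> simp
  · split_ifs <;> simp
  · simp

lemma cls0_empty (t : ℕ) (Δ : Finset (Fm At)) (ht : 2 ≤ t) (hcard : Δ.card < t)
    (hT : ∀ φ ∈ Δ, φ ∈ T t) (l m : Lit At) (h0 : cls t l m = 0) :
    l.interp (Mdl t Δ) ∩ m.interp (Mdl t Δ) = ∅ := by
  have ht0 : 0 < t := by omega
  apply Set.eq_empty_iff_forall_notMem.2
  rintro x ⟨hx1, hx2⟩
  have hauxcase : clsAux l m = 0 → False := by
    intro ha
    rcases l with p | p <;> rcases m with q | q
    · by_cases hpq : p = q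
      · have h2 : clsAux (.pos p) (.pos q) = 2 := by simp [clsAux, hpq]
        omega
      · rcases p with j | k
        · have h2 : clsAux (.pos (Sum.inl j)) (.pos q) = 2 := by
            rcases q with j' | k' <;> simp [clsAux, hpq]
          omega
        · rcases q with j' | k'
          · have h2 : clsAux (.pos (Sum.inr k)) (.pos (Sum.inl j')) = 2 := by
              simp [clsAux, hpq]
            omega
          · have hk : k ≠ k' := fun h => hpq (by rw [h])
            rcases x with s | ⟨ψ, bb⟩
            · exact hx1
            · rcases hx1 with ⟨hψΔ, hpm1⟩ | hp1
              · rcases hx2 with ⟨_, hpm2⟩ | hp2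
                · exact hk (posM_q_unique t Δ hT ψ hψΔ k k' hpm1 hpm2)
                · exact hp2
              · exact hp1
    · by_cases hpq : p = q
      · subst hpq; exact hx2 hx1
      · have h2 : clsAux (.pos p) (.neg q) = 2 := by simp [clsAux, hpq]
        omega
    · by_cases hpq : p = q
      · subst hpq; exact hx1 hx2
      · have h2 : clsAux (.neg p) (.pos q) = 2 := by simp [clsAux, hpq]
        omega
    · have h2 : clsAux (.neg p) (.neg q) = 2 := by simp [clsAux]
      omega
  cases hl : posL t l with
  | some a =>
    cases hm : posL t m with
    | some b =>
      have ha := posL_lt t l a hl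
      have hb := posL_lt t m b hm
      rw [cls_some t l m a b hl hm] at h0
      rw [interp_some t Δ ht0 hcard l a hl] at hx1
      rw [interp_some t Δ ht0 hcard m b hm] at hx2
      have hd : dd t a b = t := by have := dd_lt t a b ht0; omega
      exact ((antip t a b _ ha hb (posOf_lt t Δ ht0 hcard x) hd).1 hx2) hx1
    | none => rw [cls_none_r t l m hm] at h0; exact hauxcase h0
  | none =>
    rw [cls_none_l t l m hl] at h0; exact hauxcase h0

lemma window (t : ℕ) (ht : 2 ≤ t) (Δ : Finset (Fm At)) (hcard : Δ.card < t)
    (hT : ∀ φ ∈ Δ, φ ∈ T t) (hidx : ∀ φ ∈ Δ, φ.idx ≤ 1) :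
    ∃ (A : Type) (_ : Nonempty A) (I : At → Set A), ∀ φ ∈ Δ, φ.sat I := by
  classical
  have ht0 : 0 < t := by omega
  refine ⟨Fin (2*t) ⊕ (Fm At × Bool), ⟨Sum.inl ⟨0, by omega⟩⟩, Mdl t Δ, ?_⟩
  intro φ hφ
  have hTφ := hT φ hφ
  have hiφ := hidx φ hφ
  rcases φ with ⟨i, l, m⟩ | ⟨i, l, m⟩
  · -- le formulas
    rw [mem_T_le] at hTφ
    simp only [Fm.idx] at hiφ
    have hcls : cls t l m ≤ i := by omega
    show Cardinal.mk ↥(l.interp (Mdl t Δ) ∩ m.interp (Mdl t Δ)) ≤ (i : Cardinal)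
    rcases Nat.lt_or_ge (cls t l m) 1 with h0 | h1
    · exact mk_upper0 _ i (cls0_empty t Δ ht hcard hT l m (by omega))
    · -- cls = 1
      have h1' : cls t l m = 1 := by omega
      have hi1 : i = 1 := by omega
      obtain ⟨a, b, hl, hm, hmin⟩ : ∃ a b, posL t l = some a ∧ posL t m = some b ∧
          min (t - min (dd t a b) (2*t - dd t a b)) 2 = 1 := by
        cases hl : posL t l with
        | some a =>
          cases hm : posL t m with
          | some b =>
            rw [cls_some t l m a b hl hm] at h1'
            exact ⟨a, b, rfl, rfl, h1'⟩
          | none =>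
            rw [cls_none_r t l m hm] at h1'
            rcases clsAux_cases l m with h | h <;> omega
        | none =>
          rw [cls_none_l t l m hl] at h1'
          rcases clsAux_cases l m with h | h <;> omega
      have ha := posL_lt t l a hl
      have hb := posL_lt t m b hm
      have hanch := anchor_mem t a b ht ha hb hmin
      have hCap := cap_in t Δ ht i l m a b hφ hl hm hmin
      have hkey : ∀ x ∈ l.interp (Mdl t Δ) ∩ m.interp (Mdl t Δ),
          x = Sum.inl (⟨anchor t a b, hanch.1⟩ : Fin (2*t)) := by
        rintro x ⟨hx1, hx2⟩
        rw [interp_some t Δ ht0 hcard l a hl] at hx1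
        rw [interp_some t Δ ht0 hcard m b hm] at hx2
        have hxan : posOf t Δ x = anchor t a b :=
          cls1_unique t a b _ ht ha hb (posOf_lt t Δ ht0 hcard x) hmin hx1 hx2
        rcases x with s | ⟨ψ, bb⟩
        · congr 1
          exact Fin.ext hxan
        · exfalso
          have hspec := (frp_spec t Δ hcard (piD t ψ) (piD_lt t ht0 ψ)).2.2
          have heq : sF t Δ ψ = anchor t a b := hxan
          rw [sF] at heq
          rw [heq] at hspec
          exact hspec hCap
      rw [hi1]
      apply mk_upper1
      intro x hx y hy
      rw [hkey x hx, hkey y hy]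
  · -- gt formulas
    rw [mem_T_gt] at hTφ
    obtain ⟨hi2, hicls⟩ := hTφ
    simp only [Fm.idx] at hiφ
    show (i : Cardinal) < Cardinal.mk ↥(l.interp (Mdl t Δ) ∩ m.interp (Mdl t Δ))
    cases hl : posL t l with
    | some a =>
      cases hm : posL t m with
      | some b =>
        have ha := posL_lt t l a hl
        have hb := posL_lt t m b hm
        rw [cls_some t l m a b hl hm] at hicls
        by_cases h2 : min (t - min (dd t a b) (2*t - dd t a b)) 2 = 2
        · obtain ⟨s₁, s₂, hs₁, hs₂, hne, ⟨hw1a, hw1b⟩, ⟨hw2a, hw2b⟩⟩ :=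
            cls2_wit t a b ht ha hb h2
          have hx1 : (Sum.inl ⟨s₁, hs₁⟩ : Fin (2*t) ⊕ (Fm At × Bool)) ∈
              l.interp (Mdl t Δ) ∩ m.interp (Mdl t Δ) :=
            ⟨by rw [interp_some t Δ ht0 hcard l a hl]; exact hw1a,
             by rw [interp_some t Δ ht0 hcard m b hm]; exact hw1b⟩
          have hx2 : (Sum.inl ⟨s₂, hs₂⟩ : Fin (2*t) ⊕ (Fm At × Bool)) ∈
              l.interp (Mdl t Δ) ∩ m.interp (Mdl t Δ) :=
            ⟨by rw [interp_some t Δ ht0 hcard l a hl]; exact hw2a,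
             by rw [interp_some t Δ ht0 hcard m b hm]; exact hw2b⟩
          rcases (by omega : i = 0 ∨ i = 1) with hi | hi
          · rw [hi]; exact mk_lower0 _ ⟨_, hx1⟩
          · rw [hi]
            apply mk_lower1
            refine ⟨_, hx1, _, hx2, ?_⟩
            intro h
            apply hne
            have h' := Sum.inl.inj h
            exact congrArg Fin.val h'
        · have hmin1 : min (t - min (dd t a b) (2*t - dd t a b)) 2 = 1 := by omega
          have hi0 : i = 0 := by omega
          obtain ⟨hanlt, hana, hanb⟩ := anchor_mem t a b ht ha hb hmin1
          rw [hi0]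
          apply mk_lower0
          refine ⟨Sum.inl ⟨anchor t a b, hanlt⟩, ?_, ?_⟩
          · rw [interp_some t Δ ht0 hcard l a hl]; exact hana
          · rw [interp_some t Δ ht0 hcard m b hm]; exact hanb
      | none =>
        have hfs := fresh_sat t Δ ht hcard i l m hφ (by omega) (Or.inr hm)
        rcases (by omega : i = 0 ∨ i = 1) with hi | hi
        · rw [hi]; exact mk_lower0 _ ⟨_, hfs true⟩
        · rw [hi]
          exact mk_lower1 _ ⟨_, hfs true, _, hfs false, by simp⟩
    | none =>
      have hfs := fresh_sat t Δ ht hcard i l m hφ (by omega) (Or.inl hl)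
      rcases (by omega : i = 0 ∨ i = 1) with hi | hi
      · rw [hi]; exact mk_lower0 _ ⟨_, hfs true⟩
      · rw [hi]
        exact mk_lower1 _ ⟨_, hfs true, _, hfs false, by simp⟩

end NoSyl
namespace NoSyl

lemma dd_add (t c x : ℕ) (hc : c < 2*t) :
    dd t c ((c + x) % (2*t)) = x % (2*t) := by
  have h0 : 0 < 2*t := by omega
  have hylt : (c + x) % (2*t) < 2*t := Nat.mod_lt _ h0
  have h1 : ((c + x) % (2*t) + 2*t - c) + c = (c + x) % (2*t) + 2*t := by omega
  have h2 : (((c + x) % (2*t) + 2*t - c) + c) % (2*t) = (x + c) % (2*t) := by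
    rw [h1, Nat.add_mod_right, Nat.mod_eq_of_lt hylt, Nat.add_comm c x]
  exact Nat.ModEq.add_right_cancel' c h2

def litAt (t c : ℕ) : Lit At := if c < t then .pos (Sum.inl c) else .neg (Sum.inl (c - t))

lemma litAt_posL (t c : ℕ) (hc : c < 2*t) : posL t (litAt t c) = some c := by
  unfold litAt
  split_ifs with h
  · exact posL_pos_inl t c h
  · rw [posL_neg_inl t (c - t) (by omega)]
    congr 1
    omega

def capF (t c : ℕ) : Fm At := .le 1 (litAt t c) (litAt t ((c + t + 1) % (2*t)))

def qL (k : ℕ) : Lit At := .pos (Sum.inr k)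

def Gamma (t : ℕ) : Set (Fm At) :=
  (fun c => capF t c) '' (Set.Iio (2*t))
  ∪ (fun k => Fm.gt 1 (qL k) (qL k)) '' (Set.Iic t)
  ∪ (fun kl : ℕ × ℕ => Fm.le 0 (qL kl.1) (qL kl.2)) '' {kl : ℕ × ℕ | kl.1 < kl.2 ∧ kl.2 ≤ t}

lemma Gamma_finite (t : ℕ) : (Gamma t).Finite := by
  refine Set.Finite.union (Set.Finite.union ?_ ?_) ?_
  · exact (Set.finite_Iio _).image _
  · exact (Set.finite_Iic _).image _
  · refine Set.Finite.image _ ?_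
    refine Set.Finite.subset ((Set.finite_Iic t).prod (Set.finite_Iic t)) ?_
    rintro ⟨k, k'⟩ ⟨h1, h2⟩
    exact ⟨by simp; omega, by simp; omega⟩

lemma Gamma_idx (t : ℕ) : ∀ φ ∈ Gamma t, φ.idx ≤ 1 := by
  rintro φ ((⟨c, hc, rfl⟩ | ⟨k, hk, rfl⟩) | ⟨⟨k, k'⟩, hkk, rfl⟩)
  · exact le_refl 1
  · exact le_refl 1
  · exact Nat.zero_le 1

lemma cls_q_self (k : ℕ) : clsAux (qL k) (qL k) = 2 := by simp [clsAux, qL]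

lemma cls_q_ne (k k' : ℕ) (h : k ≠ k') : clsAux (qL k) (qL k') = 0 := by
  simp only [clsAux, qL]
  rw [if_neg (by simp [h])]

lemma posL_q (t k : ℕ) : posL t (qL k) = none := rfl

lemma Gamma_subT (t : ℕ) (ht : 2 ≤ t) : ∀ φ ∈ Gamma t, φ ∈ T t := by
  rintro φ ((⟨c, hc, rfl⟩ | ⟨k, hk, rfl⟩) | ⟨⟨k, k'⟩, ⟨hkk, hk'⟩, rfl⟩)
  · show capF t c ∈ T t
    simp only [capF]
    rw [mem_T_le]
    right
    have hc' : c < 2*t := hc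
    have hb : (c + t + 1) % (2*t) < 2*t := Nat.mod_lt _ (by omega)
    rw [cls_some t _ _ c ((c + t + 1) % (2*t)) (litAt_posL t c hc') (litAt_posL t _ hb)]
    have hd : dd t c ((c + t + 1) % (2*t)) = t + 1 := by
      have he : c + t + 1 = c + (t + 1) := by omega
      rw [he, dd_add t c (t+1) hc']
      exact Nat.mod_eq_of_lt (by omega)
    rw [hd]
    omega
  · rw [mem_T_gt]
    have h2 : cls t (qL k) (qL k) = 2 := by
      rw [cls_none_l t _ _ (posL_q t k)]
      exact cls_q_self k
    omega
  · show Fm.le 0 (qL k) (qL k') ∈ T t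
    rw [mem_T_le]
    right
    have h0 : cls t (qL k) (qL k') = 0 := by
      rw [cls_none_l t _ _ (posL_q t k)]
      exact cls_q_ne k k' (by omega)
    omega

end NoSyl
namespace NoSyl

lemma interp_litAt_antip {A : Type} (I : At → Set A) (t c : ℕ) (ht : 0 < t) (hc : c < 2*t) :
    (litAt t ((c + t) % (2*t))).interp I = ((litAt t c).interp I)ᶜ := by
  by_cases h : c < t
  · have h1 : (c + t) % (2*t) = c + t := Nat.mod_eq_of_lt (by omega)
    rw [h1]
    have h2 : litAt t (c + t) = .neg (Sum.inl c) := by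
      unfold litAt
      rw [if_neg (by omega)]
      congr 2
      omega
    have h3 : litAt t c = .pos (Sum.inl c) := by unfold litAt; rw [if_pos h]
    rw [h2, h3]
    rfl
  · have h1 : (c + t) % (2*t) = c - t := by
      rw [Nat.mod_eq_sub_mod (by omega)]
      have he : c + t - 2*t = c - t := by omega
      rw [he]
      exact Nat.mod_eq_of_lt (by omega)
    rw [h1]
    have h2 : litAt t (c - t) = .pos (Sum.inl (c - t)) := by
      unfold litAt; rw [if_pos (by omega)]
    have h3 : litAt t c = .neg (Sum.inl (c - t)) := by
      unfold litAt; rw [if_neg (by omega)]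
    rw [h2, h3]
    show I _ = ((I _)ᶜ)ᶜ
    rw [compl_compl]

lemma descent {A : Type} (I : At → Set A) (t : ℕ) (ht : 0 < t) (a : A) :
    ∃ c, c < 2*t ∧ a ∈ (litAt t c).interp I ∧
      a ∉ (litAt t ((c+1) % (2*t))).interp I := by
  by_contra h
  push_neg at h
  set Q : ℕ → Prop := fun n => a ∈ (litAt t (n % (2*t))).interp I with hQ
  have hstep : ∀ n, Q n → Q (n+1) := by
    intro n hq
    have hlt : n % (2*t) < 2*t := Nat.mod_lt _ (by omega)
    have h2 := h (n % (2*t)) hlt hq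
    have hmod : (n % (2*t) + 1) % (2*t) = (n + 1) % (2*t) := by
      conv_rhs => rw [Nat.add_mod]
      rw [Nat.mod_eq_of_lt (show (1:ℕ) < 2*t by omega)]
    show a ∈ (litAt t ((n+1) % (2*t))).interp I
    rw [← hmod]
    exact h2
  have hmono : ∀ k n, Q n → Q (n + k) := by
    intro k
    induction k with
    | zero => intro n hn; exact hn
    | succ k ih =>
      intro n hn
      exact hstep (n + k) (ih n hn)
  have hanti : ∀ n, Q (n + t) ↔ ¬ Q n := by
    intro n
    have hlt : n % (2*t) < 2*t := Nat.mod_lt _ (by omega)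
    have hmod : ((n % (2*t)) + t) % (2*t) = (n + t) % (2*t) := by
      conv_rhs => rw [Nat.add_mod]
      rw [Nat.mod_eq_of_lt (show t < 2*t by omega)]
    constructor
    · intro hq hq0
      have hmem : a ∈ (litAt t (((n % (2*t)) + t) % (2*t))).interp I := by
        rw [hmod]; exact hq
      rw [interp_litAt_antip I t (n % (2*t)) ht hlt] at hmem
      exact hmem hq0
    · intro hq0
      show a ∈ (litAt t ((n + t) % (2*t))).interp I
      rw [← hmod, interp_litAt_antip I t (n % (2*t)) ht hlt]
      exact hq0
  by_cases hq0 : Q 0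
  · have h1 : Q t := by
      have := hmono t 0 hq0
      simpa using this
    have h2 : Q (0 + t) := by simpa using h1
    exact (hanti 0).1 h2 hq0
  · have h1 : Q t := by
      have := (hanti 0).2 hq0
      simpa using this
    have h2 : Q (t + t) := hmono t t h1
    exact (hanti t).1 h2 h1

lemma Gamma_unsat (t : ℕ) (ht : 2 ≤ t) :
    ¬ ∃ (A : Type) (_ : Nonempty A) (I : At → Set A), ∀ φ ∈ Gamma t, φ.sat I := by
  rintro ⟨A, hA, I, hsat⟩
  have ht0 : 0 < t := by omega
  have hdesc : ∀ a : A, ∃ c, c < 2*t ∧ a ∈ (litAt t c).interp I ∧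
      a ∉ (litAt t ((c+1) % (2*t))).interp I := fun a => descent I t ht0 a
  choose f hf1 hf2 hf3 using hdesc
  have hreg : ∀ a : A, a ∈ (litAt t (f a)).interp I ∩
      (litAt t ((f a + t + 1) % (2*t))).interp I := by
    intro a
    refine ⟨hf2 a, ?_⟩
    have hlt : (f a + 1) % (2*t) < 2*t := Nat.mod_lt _ (by omega)
    have hmod : (((f a + 1) % (2*t)) + t) % (2*t) = (f a + t + 1) % (2*t) := by
      have he : f a + t + 1 = (f a + 1) + t := by omega
      rw [he]
      conv_rhs => rw [Nat.add_mod]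
      rw [Nat.mod_eq_of_lt (show t < 2*t by omega)]
    rw [← hmod, interp_litAt_antip I t ((f a + 1) % (2*t)) ht0 hlt]
    exact hf3 a
  have hsub : ∀ c, c < 2*t →
      ((litAt t c).interp I ∩ (litAt t ((c + t + 1) % (2*t))).interp I).Subsingleton := by
    intro c hc
    have hmem : capF t c ∈ Gamma t := Or.inl (Or.inl ⟨c, hc, rfl⟩)
    have hs := hsat _ hmem
    have h1 : Cardinal.mk ↥((litAt t c).interp I ∩
        (litAt t ((c + t + 1) % (2*t))).interp I) ≤ ((1:ℕ) : Cardinal) := hs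
    rw [Nat.cast_one] at h1
    exact Cardinal.mk_le_one_iff_set_subsingleton.1 h1
  have hq : ∀ k : Fin (t+1), ∃ x y : A, x ≠ y ∧ x ∈ I (Sum.inr k.val) ∧
      y ∈ I (Sum.inr k.val) := by
    intro k
    have hmem : Fm.gt 1 (qL k.val) (qL k.val) ∈ Gamma t :=
      Or.inl (Or.inr ⟨k.val, Set.mem_Iic.2 (by have := k.2; omega), rfl⟩)
    have hs := hsat _ hmem
    have h1 : ((1:ℕ) : Cardinal) <
        Cardinal.mk ↥((qL k.val).interp I ∩ (qL k.val).interp I) := hs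
    rw [Nat.cast_one] at h1
    obtain ⟨x, hx, y, hy, hxy⟩ :=
      Set.nontrivial_coe_sort.1 (Cardinal.one_lt_iff_nontrivial.1 h1)
    exact ⟨x, y, hxy, hx.1, hy.1⟩
  choose u v huv hu hv using hq
  have hdisj : ∀ k k' : Fin (t+1), k.val < k'.val → ∀ x : A,
      x ∈ I (Sum.inr k.val) → x ∈ I (Sum.inr k'.val) → False := by
    intro k k' hkk x hx hx'
    have hmem : Fm.le 0 (qL k.val) (qL k'.val) ∈ Gamma t :=
      Or.inr ⟨(k.val, k'.val), ⟨hkk, by have := k'.2; omega⟩, rfl⟩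
    have hs := hsat _ hmem
    have h0 : Cardinal.mk ↥((qL k.val).interp I ∩ (qL k'.val).interp I) ≤
        ((0:ℕ) : Cardinal) := hs
    rw [Nat.cast_zero] at h0
    have h1 : Cardinal.mk ↥((qL k.val).interp I ∩ (qL k'.val).interp I) = 0 :=
      le_antisymm h0 (zero_le)
    exact (Cardinal.mk_eq_zero_iff.1 h1).elim' ⟨x, hx, hx'⟩
  set g : Fin (t+1) × Bool → A := fun kb => if kb.2 then u kb.1 else v kb.1 with hg
  have hgmem : ∀ (k : Fin (t+1)) (b : Bool), g (k, b) ∈ I (Sum.inr k.val) := by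
    intro k b
    rcases b
    · exact hv k
    · exact hu k
  have hginj : Function.Injective g := by
    rintro ⟨k, b⟩ ⟨k', b'⟩ he
    by_cases hk : k = k'
    · subst hk
      rcases b <;> rcases b'
      · rfl
      · exact absurd (by simpa [hg] using he.symm : u k = v k) (huv k)
      · exact absurd (by simpa [hg] using he : u k = v k) (huv k)
      · rfl
    · exfalso
      have hx := hgmem k b
      have hx' := hgmem k' b'
      rw [he] at hx
      have hkv : k.val ≠ k'.val := fun hv' => hk (Fin.ext hv')
      rcases Nat.lt_or_ge k.val k'.val with hlt | hge
      · exact hdisj k k' hlt _ hx hx'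
      · exact hdisj k' k (by omega) _ hx' hx
  have hcomp : Function.Injective
      (fun kb : Fin (t+1) × Bool => (⟨f (g kb), hf1 (g kb)⟩ : Fin (2*t))) := by
    intro kb kb' he
    apply hginj
    have h1 : f (g kb) = f (g kb') := congrArg Fin.val he
    exact hsub (f (g kb)) (hf1 (g kb)) (hreg (g kb)) (by rw [h1]; exact hreg (g kb'))
  have hcard := Fintype.card_le_of_injective _ hcomp
  simp only [Fintype.card_prod, Fintype.card_fin, Fintype.card_bool] at hcard
  omega

end NoSyl
namespace NoSyl

lemma derive_mem (t : ℕ) (ht : 2 ≤ t) (X : Finset (Rule At))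
    (hlang : ∀ r ∈ X, r.con.idx ≤ 1 ∧ ∀ ψ ∈ r.ants, ψ.idx ≤ 1)
    (hsound : ∀ r ∈ X, Entails (↑r.ants : Set (Fm At)) r.con)
    (hK : ∀ r ∈ X, r.ants.card + 1 < t)
    {Θ : Set (Fm At)} {φ : Fm At} (hd : IndDerives (↑X : Set (Rule At)) Θ φ) :
    Θ ⊆ T t → φ ∈ T t := by
  induction hd with
  | prem h => intro hΘ; exact hΘ h
  | rule r g hr hants IH =>
    intro hΘ
    by_contra hcon
    have hrX : r ∈ X := hr
    have hneg : (Fm.map g r.con).negate ∈ T t := (mem_or_neg t _).resolve_left hcon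
    classical
    set Δ : Finset (Fm At) := insert ((Fm.map g r.con).negate) (r.ants.image (Fm.map g))
      with hΔ
    have hcard : Δ.card < t := by
      have h1 : Δ.card ≤ (r.ants.image (Fm.map g)).card + 1 := by
        rw [hΔ]; exact Finset.card_insert_le _ _
      have h2 := Finset.card_image_le (s := r.ants) (f := Fm.map g)
      have h3 := hK r hrX
      omega
    have hTΔ : ∀ ψ ∈ Δ, ψ ∈ T t := by
      intro ψ hψ
      rcases Finset.mem_insert.1 hψ with rfl | hψ'
      · exact hneg
      · obtain ⟨χ, hχ, rfl⟩ := Finset.mem_image.1 hψ'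
        exact IH χ hχ hΘ
    have hidxΔ : ∀ ψ ∈ Δ, ψ.idx ≤ 1 := by
      intro ψ hψ
      rcases Finset.mem_insert.1 hψ with rfl | hψ'
      · rw [idx_negate, idx_map]; exact (hlang r hrX).1
      · obtain ⟨χ, hχ, rfl⟩ := Finset.mem_image.1 hψ'
        rw [idx_map]; exact (hlang r hrX).2 χ hχ
    obtain ⟨A, hA, I, hsat⟩ := window t ht Δ hcard hTΔ hidxΔ
    have hI' : ∀ χ ∈ (↑r.ants : Set (Fm At)), Fm.sat (fun p => I (g p)) χ := by
      intro χ hχ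
      have hmm : Fm.map g χ ∈ Δ :=
        Finset.mem_insert_of_mem (Finset.mem_image_of_mem _ hχ)
      exact (sat_map I g χ).1 (hsat _ hmm)
    have hconsat : Fm.sat I (Fm.map g r.con) :=
      (sat_map I g r.con).2 (hsound r hrX A hA (fun p => I (g p)) hI')
    have hnegsat := hsat _ (Finset.mem_insert_self _ _)
    exact (negate_sat I _).1 hnegsat hconsat
  | raa i p hins IH =>
    rename_i Θ' θ
    intro hΘ
    by_cases hθ : θ ∈ T t
    · exfalso
      have habs := IH (fun x hx => by
        rcases Set.mem_insert_iff.1 hx with rfl | hx'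
        · exact hθ
        · exact hΘ hx')
      exact no_absurd t (by omega) i p habs
    · exact (mem_or_neg t θ).resolve_left hθ

end NoSyl

/-- no finite set of sound syllogistic rules in `𝒮†₁` yields a complete
indirect derivation relation: there is a finite unsatisfiable set of `𝒮†₁`-formulas from
which no absurdity is indirectly derivable. -/
theorem no_complete_indirect_system (X : Finset (Rule (Sum ℕ ℕ)))
    (hlang : ∀ r ∈ X, r.con.idx ≤ 1 ∧ ∀ ψ ∈ r.ants, ψ.idx ≤ 1)
    (hsound : ∀ r ∈ X, Entails (↑r.ants : Set (Fm (Sum ℕ ℕ))) r.con) :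
    ∃ Γ : Set (Fm (Sum ℕ ℕ)), Γ.Finite ∧ (∀ φ ∈ Γ, φ.idx ≤ 1) ∧
      (¬ ∃ (A : Type) (_ : Nonempty A) (I : Sum ℕ ℕ → Set A), ∀ φ ∈ Γ, φ.sat I) ∧
      ∀ (i : ℕ) (p : Sum ℕ ℕ),
        ¬ IndDerives (↑X : Set (Rule (Sum ℕ ℕ))) Γ (Fm.gt i (Lit.pos p) (Lit.neg p)) := by
  classical
  obtain ⟨t, ht, hK⟩ : ∃ t : ℕ, 2 ≤ t ∧ ∀ r ∈ X, r.ants.card + 1 < t :=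
    ⟨(X.sup fun r => r.ants.card) + 2, by omega, fun r hr => by
      have h2 : r.ants.card ≤ X.sup fun r => r.ants.card :=
        Finset.le_sup (f := fun r => r.ants.card) hr
      omega⟩
  refine ⟨NoSyl.Gamma t, NoSyl.Gamma_finite t, NoSyl.Gamma_idx t, NoSyl.Gamma_unsat t ht, ?_⟩
  intro i p hder
  have hmem := NoSyl.derive_mem t ht X hlang hsound hK hder
    (fun φ hφ => NoSyl.Gamma_subT t ht φ hφ)
  exact NoSyl.no_absurd t (by omega) i p hmem
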